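/- arXiv:1510.04849 — 4 statements merged into one kernel-verified Lean document; each statement's English description precedes it below -/
import Mathlib

section
/- Two Cauchy sequences u, v in A* (with respect to the profinite metric) are equivalent (distance 0) if and only if the associated ultrafilters F_u and F_v on the regular languages coincide, where F_u = {L regular | ∃n₀ ∀n ≥ n₀ : u_n ∈ L}. -/
/-- A finite monoid of cardinality k separates the words x and y if some monoid morphism
from the free monoid into it distinguishes them. -/
def SeparatesCard (A : Type) (k : ℕ) (x y : List A) : Prop :=
  ∃ (M : Type) (_ : Monoid M) (_ : Fintype M), Fintype.card M = k ∧
    ∃ φ : FreeMonoid A →* M, φ x ≠ φ y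

open Classical in
/-- The profinite metric d(x,y) = 2^{-min{|M| : M separates x and y}} on A*. -/
noncomputable def pdist {A : Type} (x y : List A) : ℝ :=
  if h : {k : ℕ | SeparatesCard A k x y}.Nonempty then
    ((2 : ℝ) ^ (sInf {k : ℕ | SeparatesCard A k x y}))⁻¹
  else 0

/-- A Cauchy sequence of words with respect to the profinite metric. -/
def IsPCauchy {A : Type} (u : ℕ → List A) : Prop :=
  ∀ ε : ℝ, 0 < ε → ∃ N : ℕ, ∀ m n : ℕ, N ≤ m → N ≤ n → pdist (u m) (u n) < ε

/-- A language is regular iff it is recognized by a finite monoid. -/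
def RegularLang {A : Type} (L : Set (List A)) : Prop :=
  ∃ (M : Type) (_ : Monoid M) (_ : Fintype M) (φ : FreeMonoid A →* M) (S : Set M),
    L = φ ⁻¹' S

/-- The set of regular languages eventually containing the sequence u. -/
def Fu {A : Type} (u : ℕ → List A) : Set (Set (List A)) :=
  {L | RegularLang L ∧ ∃ n₀ : ℕ, ∀ n : ℕ, n₀ ≤ n → u n ∈ L}

section Aux
open Classical

lemma sep_symm {A : Type} {k : ℕ} {x y : List A} (h : SeparatesCard A k x y) :
    SeparatesCard A k y x := by
  obtain ⟨M, i1, i2, hc, φ, hφ⟩ := h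
  exact ⟨M, i1, i2, hc, φ, hφ.symm⟩

lemma pdist_comm {A : Type} (x y : List A) : pdist x y = pdist y x := by
  unfold pdist
  have h : {k : ℕ | SeparatesCard A k x y} = {k : ℕ | SeparatesCard A k y x} :=
    Set.ext fun k => ⟨sep_symm, sep_symm⟩
  rw [h]

lemma pdist_nonneg {A : Type} (x y : List A) : 0 ≤ pdist x y := by
  unfold pdist
  split
  · positivity
  · exact le_refl 0

lemma le_pdist {A : Type} {c : ℕ} {x y : List A} (h : SeparatesCard A c x y) :
    ((2:ℝ)^c)⁻¹ ≤ pdist x y := by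
  unfold pdist
  have hne : {k : ℕ | SeparatesCard A k x y}.Nonempty := ⟨c, h⟩
  rw [dif_pos hne]
  have h1 : sInf {k : ℕ | SeparatesCard A k x y} ≤ c := Nat.sInf_le h
  have h2 : (2:ℝ)^(sInf {k : ℕ | SeparatesCard A k x y}) ≤ 2^c :=
    pow_le_pow_right₀ one_le_two h1
  exact inv_anti₀ (by positivity) h2

lemma not_sep_of_lt {A : Type} {c : ℕ} {x y : List A}
    (h : pdist x y < ((2:ℝ)^c)⁻¹) : ¬ SeparatesCard A c x y :=
  fun hs => absurd (le_pdist hs) (not_le.mpr h)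

noncomputable instance endFintype (k : ℕ) : Fintype (Function.End (Fin k)) :=
  inferInstanceAs (Fintype (Fin k → Fin k))

/-- auxiliary: extend multiplication through an embedding into `Fin k`. -/
noncomputable def endFun {M : Type} [Monoid M] {k : ℕ} (j : M ↪ Fin k) (g : M) :
    Fin k → Fin k :=
  fun x => if h : ∃ m, j m = x then j (g * h.choose) else x

noncomputable def toEnd {M : Type} [Monoid M] {k : ℕ} (j : M ↪ Fin k) :
    M →* Function.End (Fin k) where
  toFun := endFun j
  map_one' := by
    funext x
    unfold endFun
    split
    · rename_i h
      rw [one_mul, h.choose_spec]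
      rfl
    · rfl
  map_mul' g₁ g₂ := by
    funext x
    show endFun j (g₁ * g₂) x = endFun j g₁ (endFun j g₂ x)
    unfold endFun
    by_cases h : ∃ m, j m = x
    · have h2 : ∃ m, j m = j (g₂ * h.choose) := ⟨g₂ * h.choose, rfl⟩
      have e2 : h2.choose = g₂ * h.choose := j.injective h2.choose_spec
      rw [dif_pos h, dif_pos h, dif_pos h2, e2, mul_assoc]
    · rw [dif_neg h, dif_neg h, dif_neg h]

lemma toEnd_apply_one {M : Type} [Monoid M] {k : ℕ} (j : M ↪ Fin k) (g : M) :
    toEnd j g (j 1) = j g := by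
  show endFun j g (j 1) = j g
  unfold endFun
  have h : ∃ m, j m = j 1 := ⟨1, rfl⟩
  rw [dif_pos h, j.injective h.choose_spec, mul_one]

lemma sep_to_end {A : Type} {k c : ℕ} {x y : List A} (hck : c ≤ k)
    (h : SeparatesCard A c x y) :
    ∃ ψ : FreeMonoid A →* Function.End (Fin k), ψ x ≠ ψ y := by
  obtain ⟨M, iM, iF, hc, φ, hφ⟩ := h
  letI := iM; letI := iF
  have hcard : Fintype.card M ≤ Fintype.card (Fin k) := by
    rw [Fintype.card_fin, hc]; exact hck
  obtain ⟨j⟩ := Function.Embedding.nonempty_of_card_le hcard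
  refine ⟨(toEnd j).comp φ, fun heq => hφ ?_⟩
  have h1 : toEnd j (φ x) = toEnd j (φ y) := heq
  have h2 : toEnd j (φ x) (j 1) = toEnd j (φ y) (j 1) := by rw [h1]
  rw [toEnd_apply_one, toEnd_apply_one] at h2
  exact j.injective h2

lemma eventually_const {A : Type} {u : ℕ → List A} (hu : IsPCauchy u) {k : ℕ}
    (ψ : FreeMonoid A →* Function.End (Fin k)) :
    ∃ N, ∀ m n, N ≤ m → N ≤ n → ψ (u m) = ψ (u n) := by
  set c := Fintype.card (Function.End (Fin k)) with hc
  obtain ⟨N, hN⟩ := hu ((2:ℝ)^c)⁻¹ (by positivity)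
  refine ⟨N, fun m n hm hn => ?_⟩
  by_contra hne
  exact not_sep_of_lt (hN m n hm hn)
    ⟨Function.End (Fin k), inferInstance, endFintype k, rfl, ψ, hne⟩

lemma per_psi {A : Type} {u v : ℕ → List A} (hu : IsPCauchy u) (hv : IsPCauchy v)
    (h : Fu u = Fu v) {k : ℕ} (ψ : FreeMonoid A →* Function.End (Fin k)) :
    ∃ N, ∀ n, N ≤ n → ψ (u n) = ψ (v n) := by
  obtain ⟨N₁, h₁⟩ := eventually_const hu ψ
  obtain ⟨N₂, h₂⟩ := eventually_const hv ψ
  have hL : (ψ ⁻¹' {ψ (u N₁)} : Set (List A)) ∈ Fu u := by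
    refine ⟨⟨Function.End (Fin k), inferInstance, endFintype k, ψ, {ψ (u N₁)}, rfl⟩,
      N₁, fun n hn => ?_⟩
    show ψ (u n) ∈ ({ψ (u N₁)} : Set (Function.End (Fin k)))
    rw [h₁ n N₁ hn le_rfl]
    exact rfl
  rw [h] at hL
  obtain ⟨-, n₀, hn₀⟩ := hL
  refine ⟨max N₁ (max N₂ n₀), fun n hn => ?_⟩
  have hn1 : N₁ ≤ n := le_trans (le_max_left _ _) hn
  have hn2 : N₂ ≤ n := le_trans (le_trans (le_max_left _ _) (le_max_right _ _)) hn
  have hm0 : ψ (v (max N₂ n₀)) = ψ (u N₁) :=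
    hn₀ (max N₂ n₀) (le_max_right _ _)
  have : ψ (v n) = ψ (v (max N₂ n₀)) := h₂ n (max N₂ n₀) hn2 (le_max_left _ _)
  rw [this, hm0, h₁ n N₁ hn1 le_rfl]

lemma uniform {A : Type} [Fintype A] {u v : ℕ → List A} (hu : IsPCauchy u)
    (hv : IsPCauchy v) (h : Fu u = Fu v) (k : ℕ) :
    ∃ N, ∀ ψ : FreeMonoid A →* Function.End (Fin k), ∀ n, N ≤ n → ψ (u n) = ψ (v n) := by
  classical
  let g : (A → Function.End (Fin k)) → ℕ :=
    fun f => (per_psi hu hv h (FreeMonoid.lift f)).choose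
  refine ⟨Finset.univ.sup g, fun ψ n hn => ?_⟩
  have hψ : FreeMonoid.lift (FreeMonoid.lift.symm ψ) = ψ := FreeMonoid.lift.apply_symm_apply ψ
  have hspec := (per_psi hu hv h (FreeMonoid.lift (FreeMonoid.lift.symm ψ))).choose_spec
  have hle : g (FreeMonoid.lift.symm ψ) ≤ Finset.univ.sup g :=
    Finset.le_sup (Finset.mem_univ _)
  have := hspec n (le_trans hle hn)
  rwa [hψ] at this

lemma fu_sub {A : Type} (u v : ℕ → List A)
    (h : Filter.Tendsto (fun n => pdist (u n) (v n)) Filter.atTop (nhds 0)) :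
    Fu u ⊆ Fu v := by
  rintro L ⟨⟨M, iM, iF, φ, S, rfl⟩, n₀, hn⟩
  letI := iM; letI := iF
  have hpos : (0:ℝ) < ((2:ℝ)^(Fintype.card M))⁻¹ := by positivity
  obtain ⟨N, hN⟩ := (Metric.tendsto_atTop.mp h) (((2:ℝ)^(Fintype.card M))⁻¹) hpos
  refine ⟨⟨M, iM, iF, φ, S, rfl⟩, max N n₀, fun n hn' => ?_⟩
  have h1 : pdist (u n) (v n) < ((2:ℝ)^(Fintype.card M))⁻¹ := by
    have := hN n (le_trans (le_max_left _ _) hn')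
    rwa [Real.dist_eq, sub_zero, abs_of_nonneg (pdist_nonneg _ _)] at this
  have heq : φ (u n) = φ (v n) := by
    by_contra hne
    exact not_sep_of_lt h1 ⟨M, iM, iF, rfl, φ, hne⟩
  have hu' := hn n (le_trans (le_max_right _ _) hn')
  show φ (v n) ∈ S
  rw [← heq]
  exact hu'

end Aux

/-- Two Cauchy sequences u, v in A* (profinite metric) are equivalent
(distance 0, i.e. lim d(u_n,v_n) = 0) iff the associated ultrafilters F_u and F_v on
the regular languages coincide. -/
theorem stmt7 {A : Type} [Fintype A] (u v : ℕ → List A)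
    (hu : IsPCauchy u) (hv : IsPCauchy v) :
    Filter.Tendsto (fun n => pdist (u n) (v n)) Filter.atTop (nhds 0) ↔ Fu u = Fu v := by
  constructor
  · intro h
    have h' : Filter.Tendsto (fun n => pdist (v n) (u n)) Filter.atTop (nhds 0) := by
      have : (fun n => pdist (v n) (u n)) = fun n => pdist (u n) (v n) :=
        funext fun n => pdist_comm _ _
      rwa [this]
    exact Set.Subset.antisymm (fu_sub u v h) (fu_sub v u h')
  · intro h
    rw [Metric.tendsto_atTop]
    intro ε hε
    obtain ⟨k, hk⟩ : ∃ k : ℕ, ((2:ℝ)^k)⁻¹ < ε := by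
      obtain ⟨k, hk⟩ := exists_pow_lt_of_lt_one hε (by norm_num : (1:ℝ)/2 < 1)
      refine ⟨k, ?_⟩
      rwa [div_pow, one_pow, one_div] at hk
    obtain ⟨N, hN⟩ := uniform hu hv h k
    refine ⟨N, fun n hn => ?_⟩
    rw [Real.dist_eq, sub_zero, abs_of_nonneg (pdist_nonneg _ _)]
    have hmain : pdist (u n) (v n) ≤ ((2:ℝ)^k)⁻¹ := by
      unfold pdist
      split
      · rename_i hne
        have hmem := Nat.sInf_mem hne
        have hgt : k ≤ sInf {c : ℕ | SeparatesCard A c (u n) (v n)} := by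
          by_contra hlt
          push_neg at hlt
          obtain ⟨ψ, hψ⟩ := sep_to_end (le_of_lt hlt) hmem
          exact hψ (hN ψ n hn)
        have : (2:ℝ)^k ≤ 2^(sInf {c : ℕ | SeparatesCard A c (u n) (v n)}) :=
          pow_le_pow_right₀ one_le_two hgt
        exact inv_anti₀ (by positivity) this
      · positivity
    exact lt_of_le_of_lt hmain hk
end

section
/- The free profinite monoid over a finite alphabet A (the metric completion of A* under the profinite metric) is homeomorphic to the Stone space of the Boolean algebra of regular languages over A*, i.e., the space of ultrafilters of regular languages with the topology generated by the sets {γ : L ∈ γ}. -/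
/-- An ultrafilter of the Boolean algebra of regular languages over A*. -/
def IsRegUltrafilter {A : Type} (γ : Set (Set (List A))) : Prop :=
  (∀ L ∈ γ, RegularLang L) ∧ γ.Nonempty ∧ (∅ : Set (List A)) ∉ γ ∧
  (∀ L K : Set (List A), L ∈ γ → RegularLang K → L ⊆ K → K ∈ γ) ∧
  (∀ L K : Set (List A), L ∈ γ → K ∈ γ → L ∩ K ∈ γ) ∧
  (∀ L : Set (List A), RegularLang L → L ∈ γ ∨ Lᶜ ∈ γ)

/-- The Stone space of the Boolean algebra of regular languages over A*: the set of its
ultrafilters. -/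
def RegStone (A : Type) : Type := {γ : Set (Set (List A)) // IsRegUltrafilter γ}

/-- The Stone topology, generated by the basic sets {γ | L ∈ γ} for L regular. -/
instance (A : Type) : TopologicalSpace (RegStone A) :=
  TopologicalSpace.generateFrom
    {U | ∃ L : Set (List A), RegularLang L ∧ U = {γ : RegStone A | L ∈ γ.1}}


/-! ### Auxiliary machinery -/

namespace Stmt9Aux

/-- Monoid structures on `Fin j`, as data. -/
abbrev MonData (j : ℕ) : Type :=
  {p : (Fin j → Fin j → Fin j) × Fin j //
    (∀ a b c, p.1 (p.1 a b) c = p.1 a (p.1 b c)) ∧ (∀ a, p.1 p.2 a = a) ∧ (∀ a, p.1 a p.2 = a)}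

def monOf {j : ℕ} (d : MonData j) : Monoid (Fin j) where
  mul := d.1.1
  one := d.1.2
  mul_assoc := d.2.1
  one_mul := d.2.2.1
  mul_one := d.2.2.2

/-- Index type for all monoids of size ≤ k together with generator assignments. -/
abbrev Idx (A : Type) (k : ℕ) : Type := Σ j : Fin (k+1), MonData j.1 × (A → Fin j.1)

instance idxMonoid {A : Type} {k : ℕ} (i : Idx A k) : Monoid (Fin i.1.1) := monOf i.2.1

/-- The universal finite monoid of level k. -/
abbrev P (A : Type) (k : ℕ) : Type := ∀ i : Idx A k, Fin i.1.1

example (A : Type) [Fintype A] (k : ℕ) : Finite (P A k) := inferInstance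
example (A : Type) (k : ℕ) : Monoid (P A k) := inferInstance

/-- Component morphism. -/
def comp {A : Type} {k : ℕ} (i : Idx A k) : FreeMonoid A →* Fin i.1.1 := FreeMonoid.lift i.2.2

/-- The universal morphism. -/
def Phi (A : Type) (k : ℕ) : FreeMonoid A →* P A k where
  toFun := fun x i => comp i x
  map_one' := funext fun i => (comp i).map_one
  map_mul' := fun x y => funext fun i => (comp i).map_mul x y

lemma sep_iff {A : Type} (k : ℕ) (x y : List A) :
    (∃ k' ≤ k, SeparatesCard A k' x y) ↔ Phi A k x ≠ Phi A k y := by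
  constructor
  · rintro ⟨k', hk', M, _, _, hcard, φ, hφ⟩
    let E : M ≃ Fin k' := (Fintype.equivFin M).trans (finCongr hcard)
    let d : MonData k' := ⟨⟨fun a b => E (E.symm a * E.symm b), E 1⟩, by
      refine ⟨?_, ?_, ?_⟩ <;> intros <;> simp [mul_assoc]⟩
    let i : Idx A k := ⟨⟨k', Nat.lt_succ_of_le hk'⟩, d, fun a => E (φ (FreeMonoid.of a))⟩
    letI : Monoid (Fin i.1.1) := idxMonoid i
    let ψ : FreeMonoid A →* Fin i.1.1 :=
      { toFun := fun w => E (φ w)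
        map_one' := by
          show E (φ 1) = d.1.2
          rw [map_one]
        map_mul' := by
          intro a b
          show E (φ (a * b)) = d.1.1 (E (φ a)) (E (φ b))
          show E (φ (a * b)) = E (E.symm (E (φ a)) * E.symm (E (φ b)))
          simp [map_mul] }
    have hcomp : comp i = ψ := by
      apply FreeMonoid.hom_eq
      intro a
      show FreeMonoid.lift i.2.2 (FreeMonoid.of a) = E (φ (FreeMonoid.of a))
      simp [FreeMonoid.lift_eval_of]; rfl
    intro hEq
    have h1 : comp i x = comp i y := congrFun hEq i
    rw [hcomp] at h1
    exact hφ (E.injective h1)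
  · intro h
    have : ∃ i, Phi A k x i ≠ Phi A k y i := by
      by_contra h'
      push_neg at h'
      exact h (funext h')
    obtain ⟨i, hi⟩ := this
    exact ⟨i.1.1, Nat.lt_succ_iff.mp i.1.2, Fin i.1.1, idxMonoid i, inferInstance,
      Fintype.card_fin _, comp i, hi⟩

lemma pdist_lt_iff {A : Type} (k : ℕ) (x y : List A) :
    pdist x y < ((2 : ℝ) ^ k)⁻¹ ↔ Phi A k x = Phi A k y := by
  have hsep := sep_iff k x y
  by_cases h : {k : ℕ | SeparatesCard A k x y}.Nonempty
  · unfold pdist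
    rw [dif_pos h]
    have h2 : (0:ℝ) < 2 := by norm_num
    rw [inv_lt_inv₀ (by positivity) (by positivity), pow_lt_pow_iff_right₀ (by norm_num : (1:ℝ) < 2)]
    constructor
    · intro hk
      by_contra hne
      obtain ⟨k', hk', hs⟩ := hsep.mpr hne
      have hmem : k' ∈ {k : ℕ | SeparatesCard A k x y} := hs
      exact absurd (Nat.sInf_le hmem) (by omega)
    · intro hphi
      by_contra hle
      push_neg at hle
      have hmem := Nat.sInf_mem h
      exact (hsep.mp ⟨_, by omega, hmem⟩) hphi
  · unfold pdist
    rw [dif_neg h]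
    have : Phi A k x = Phi A k y := by
      by_contra hne
      obtain ⟨k', _, hs⟩ := hsep.mpr hne
      exact h ⟨k', hs⟩
    simp only [this, iff_true]
    positivity

lemma phi_eq_of {A : Type} (k : ℕ) (M : Type) [Monoid M] [Fintype M]
    (hcard : Fintype.card M ≤ k) (φ : FreeMonoid A →* M) {x y : List A}
    (h : Phi A k x = Phi A k y) : φ x = φ y := by
  by_contra hne
  exact (sep_iff k x y).mp ⟨Fintype.card M, hcard, M, ‹_›, ‹_›, rfl, φ, hne⟩ h

lemma regular_univ {A : Type} : RegularLang (Set.univ : Set (List A)) :=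
  ⟨PUnit, inferInstance, inferInstance, 1, Set.univ, by simp; rfl⟩

lemma regular_compl {A : Type} {L : Set (List A)} (h : RegularLang L) : RegularLang Lᶜ := by
  obtain ⟨M, _, _, φ, S, rfl⟩ := h
  exact ⟨M, ‹_›, ‹_›, φ, Sᶜ, by rw [Set.preimage_compl]; rfl⟩

lemma regular_inter {A : Type} {L K : Set (List A)} (hL : RegularLang L) (hK : RegularLang K) :
    RegularLang (L ∩ K) := by
  obtain ⟨M, _, _, φ, S, rfl⟩ := hL
  obtain ⟨N, _, _, ψ, T, rfl⟩ := hK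
  refine ⟨M × N, inferInstance, inferInstance, φ.prod ψ, S ×ˢ T, ?_⟩
  ext w
  exact Iff.rfl

lemma regular_phiInv {A : Type} [Fintype A] (k : ℕ) (S : Set (P A k)) :
    RegularLang ((Phi A k) ⁻¹' S) :=
  ⟨P A k, inferInstance, Fintype.ofFinite _, Phi A k, S, rfl⟩

lemma fu_ultra {A : Type} {u : ℕ → List A} (hu : IsPCauchy u) : IsRegUltrafilter (Fu u) := by
  refine ⟨fun L hL => hL.1, ⟨Set.univ, regular_univ, 0, fun n _ => trivial⟩, ?_, ?_, ?_, ?_⟩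
  · rintro ⟨-, n₀, h⟩
    exact h n₀ le_rfl
  · rintro L K ⟨-, n₀, h⟩ hK hsub
    exact ⟨hK, n₀, fun n hn => hsub (h n hn)⟩
  · rintro L K ⟨hL, n₀, h⟩ ⟨hK, n₁, h'⟩
    exact ⟨regular_inter hL hK, max n₀ n₁, fun n hn =>
      ⟨h n (le_trans (le_max_left _ _) hn), h' n (le_trans (le_max_right _ _) hn)⟩⟩
  · rintro L ⟨M, _, _, φ, S, rfl⟩
    obtain ⟨N, hN⟩ := hu ((2 : ℝ) ^ (Fintype.card M))⁻¹ (by positivity)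
    have hconst : ∀ n, N ≤ n → φ (u n) = φ (u N) :=
      fun n hn => phi_eq_of (Fintype.card M) M le_rfl φ
        ((pdist_lt_iff _ _ _).mp (hN n N hn le_rfl))
    by_cases hS : φ (u N) ∈ S
    · exact Or.inl ⟨⟨M, ‹_›, ‹_›, φ, S, rfl⟩, N, fun n hn => by
        show φ (u n) ∈ S; rw [hconst n hn]; exact hS⟩
    · refine Or.inr ⟨regular_compl ⟨M, ‹_›, ‹_›, φ, S, rfl⟩, N, fun n hn => ?_⟩
      show φ (u n) ∉ S; rw [hconst n hn]
      exact hS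

lemma fu_congr {A : Type} {u v : ℕ → List A}
    (h : ∀ ε : ℝ, 0 < ε → ∃ N, ∀ n, N ≤ n → pdist (u n) (v n) < ε) : Fu u ⊆ Fu v := by
  rintro L ⟨hreg, n₀, hmem⟩
  obtain ⟨M, _, _, φ, S, hL⟩ := id hreg
  obtain ⟨N, hN⟩ := h ((2 : ℝ) ^ (Fintype.card M))⁻¹ (by positivity)
  refine ⟨hreg, max n₀ N, fun n hn => ?_⟩
  have heq : φ (u n) = φ (v n) :=
    phi_eq_of (Fintype.card M) M le_rfl φ
      ((pdist_lt_iff _ _ _).mp (hN n (le_trans (le_max_right _ _) hn)))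
  have hu : u n ∈ L := hmem n (le_trans (le_max_left _ _) hn)
  rw [hL] at hu ⊢
  show φ (v n) ∈ S; rw [← heq]; exact hu

lemma phi_mono {A : Type} {k j : ℕ} (hkj : k ≤ j) {x y : List A}
    (h : Phi A j x = Phi A j y) : Phi A k x = Phi A k y := by
  by_contra hne
  obtain ⟨k', hk', hs⟩ := (sep_iff k x y).mpr hne
  exact (sep_iff j x y).mp ⟨k', le_trans hk' hkj, hs⟩ h

lemma exists_class {A : Type} [Fintype A] {γ : Set (Set (List A))} (hγ : IsRegUltrafilter γ)
    (k : ℕ) : ∃ m : P A k, (Phi A k) ⁻¹' {m} ∈ γ := by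
  classical
  obtain ⟨hreg, hne, hemp, hup, hint, hprime⟩ := hγ
  by_contra h
  push_neg at h
  have hcompl : ∀ m : P A k, ((Phi A k) ⁻¹' {m})ᶜ ∈ γ := fun m =>
    (hprime _ (regular_phiInv k {m})).resolve_left (h m)
  have huniv : Set.univ ∈ γ := by
    obtain ⟨L, hL⟩ := hne
    exact hup L _ hL regular_univ (Set.subset_univ L)
  haveI : Fintype (P A k) := Fintype.ofFinite _
  have key : ∀ s : Finset (P A k), (⋂ m ∈ s, ((Phi A k) ⁻¹' {m})ᶜ) ∈ γ := by
    intro s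
    induction s using Finset.induction_on with
    | empty =>
      have h0 : (⋂ m ∈ (∅ : Finset (P A k)), ((Phi A k) ⁻¹' {m})ᶜ) = (Set.univ : Set (FreeMonoid A)) := by simp
      rw [h0]; exact huniv
    | insert _ _ hx ih =>
      rw [Finset.set_biInter_insert]
      exact hint _ _ (hcompl _) ih
  have hempty : (⋂ m ∈ (Finset.univ : Finset (P A k)), ((Phi A k) ⁻¹' {m})ᶜ) = ∅ := by
    ext x
    simp only [Set.mem_iInter, Set.mem_compl_iff, Set.mem_preimage, Set.mem_singleton_iff,
      Set.mem_empty_iff_false, iff_false, not_forall, not_not]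
    exact ⟨Phi A k x, Finset.mem_univ _, rfl⟩
  exact hemp (hempty ▸ key Finset.univ)

lemma stone_basic_open {A : Type} {L : Set (List A)} (hL : RegularLang L) :
    IsOpen {γ : RegStone A | L ∈ γ.1} :=
  TopologicalSpace.GenerateOpen.basic _ ⟨L, hL, rfl⟩

lemma t2 (A : Type) : T2Space (RegStone A) := by
  have key : ∀ (γ δ : RegStone A) (L : Set (List A)), L ∈ γ.1 → L ∉ δ.1 →
      ∃ u v : Set (RegStone A), IsOpen u ∧ IsOpen v ∧ γ ∈ u ∧ δ ∈ v ∧ Disjoint u v := by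
    intro γ δ L hγL hδL
    have hreg : RegularLang L := γ.2.1 L hγL
    have hδc : Lᶜ ∈ δ.1 := (δ.2.2.2.2.2.2 L hreg).resolve_left hδL
    refine ⟨{σ : RegStone A | L ∈ σ.1}, {σ : RegStone A | Lᶜ ∈ σ.1},
      stone_basic_open hreg, stone_basic_open (regular_compl hreg), hγL, hδc, ?_⟩
    rw [Set.disjoint_left]
    rintro σ h1 h2
    have hint := σ.2.2.2.2.2.1 L Lᶜ h1 h2
    rw [Set.inter_compl_self] at hint
    exact σ.2.2.2.1 hint
  constructor
  intro γ δ hne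
  have hval : γ.1 ≠ δ.1 := fun h => hne (Subtype.ext h)
  have : ∃ L, (L ∈ γ.1 ∧ L ∉ δ.1) ∨ (L ∈ δ.1 ∧ L ∉ γ.1) := by
    by_contra h
    push_neg at h
    apply hval
    ext L
    have := h L
    tauto
  obtain ⟨L, hL | hL⟩ := this
  · exact key γ δ L hL.1 hL.2
  · obtain ⟨u, v, hu, hv, h1, h2, hd⟩ := key δ γ L hL.1 hL.2
    exact ⟨v, u, hv, hu, h2, h1, hd.symm⟩

end Stmt9Aux

/-- The free profinite monoid over a finite alphabet A — i.e. any complete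
metric space C into which A* embeds isometrically (w.r.t. the profinite metric) and
densely — is homeomorphic to the Stone space of the Boolean algebra of regular languages
over A*. -/
theorem stmt9 {A : Type} [Fintype A] (C : Type) [MetricSpace C] [CompleteSpace C]
    (e : List A → C) (hiso : ∀ x y : List A, dist (e x) (e y) = pdist x y)
    (hdense : DenseRange e) :
    Nonempty (C ≃ₜ RegStone A) := by
  classical
  open Stmt9Aux in
  -- helper: small fractions
  have hfrac : ∀ δ : ℝ, 0 < δ → ∃ N : ℕ, ∀ n : ℕ, N ≤ n → 1 / ((n : ℝ) + 1) < δ := by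
    intro δ hδ
    obtain ⟨N, hN⟩ := exists_nat_gt (1 / δ)
    refine ⟨N, fun n hn => ?_⟩
    have hcast : (N : ℝ) ≤ (n : ℝ) := Nat.cast_le.mpr hn
    have h1 : (1 : ℝ) / δ < (n : ℝ) + 1 := by linarith
    rw [div_lt_iff₀ (by positivity : (0:ℝ) < (n : ℝ) + 1)]
    rw [div_lt_iff₀ hδ] at h1
    nlinarith
  have hpow : ∀ ε : ℝ, 0 < ε → ∃ k : ℕ, ((2 : ℝ) ^ k)⁻¹ < ε := by
    intro ε hε
    obtain ⟨k, hk⟩ := exists_pow_lt_of_lt_one hε (by norm_num : (1 : ℝ) / 2 < 1)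
    refine ⟨k, ?_⟩
    rwa [one_div, inv_pow] at hk
  -- approximating sequences
  obtain ⟨seq, hseq⟩ : ∃ seq : C → ℕ → List A, ∀ c n, dist (e (seq c n)) c < 1 / ((n : ℝ) + 1) := by
    have h : ∀ c : C, ∀ n : ℕ, ∃ x : List A, dist (e x) c < 1 / ((n : ℝ) + 1) := by
      intro c n
      obtain ⟨x, hx⟩ := Metric.denseRange_iff.mp hdense c (1 / ((n : ℝ) + 1)) (by positivity)
      exact ⟨x, by rwa [dist_comm]⟩
    choose seq hseq using h
    exact ⟨seq, hseq⟩
  have seqCauchy : ∀ c, IsPCauchy (seq c) := by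
    intro c ε hε
    obtain ⟨N, hN⟩ := hfrac (ε / 2) (by positivity)
    refine ⟨N, fun p q hp hq => ?_⟩
    rw [← hiso]
    calc dist (e (seq c p)) (e (seq c q))
        ≤ dist (e (seq c p)) c + dist (e (seq c q)) c := dist_triangle_right _ _ _
      _ < ε / 2 + ε / 2 := by
          have := lt_trans (hseq c p) (hN p hp)
          have := lt_trans (hseq c q) (hN q hq)
          linarith
      _ = ε := by ring
  set F : C → RegStone A := fun c => ⟨Fu (seq c), Stmt9Aux.fu_ultra (seqCauchy c)⟩ with hF
  -- eventual constancy of Phi along seq c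
  have hev : ∀ (c : C) (k : ℕ), ∃ N, ∀ p q, N ≤ p → N ≤ q →
      Phi A k (seq c p) = Phi A k (seq c q) := by
    intro c k
    obtain ⟨N, hN⟩ := seqCauchy c ((2 : ℝ) ^ k)⁻¹ (by positivity)
    exact ⟨N, fun p q hp hq => (pdist_lt_iff k _ _).mp (hN p q hp hq)⟩
  -- cross comparison
  have hcross : ∀ (c c' : C) (k : ℕ), dist c c' < ((2 : ℝ) ^ k)⁻¹ →
      ∃ N, ∀ n, N ≤ n → Phi A k (seq c n) = Phi A k (seq c' n) := by
    intro c c' k hcc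
    have hδ : 0 < (((2 : ℝ) ^ k)⁻¹ - dist c c') / 2 := by linarith
    obtain ⟨N, hN⟩ := hfrac _ hδ
    refine ⟨N, fun n hn => (pdist_lt_iff k _ _).mp ?_⟩
    rw [← hiso]
    have h1 : dist (e (seq c n)) c < (((2 : ℝ) ^ k)⁻¹ - dist c c') / 2 :=
      lt_trans (hseq c n) (hN n hn)
    have h2 : dist (e (seq c' n)) c' < (((2 : ℝ) ^ k)⁻¹ - dist c c') / 2 :=
      lt_trans (hseq c' n) (hN n hn)
    calc dist (e (seq c n)) (e (seq c' n))
        ≤ dist (e (seq c n)) c + dist c c' + dist c' (e (seq c' n)) := dist_triangle4 _ _ _ _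
      _ < (((2:ℝ)^k)⁻¹ - dist c c') / 2 + dist c c' + (((2:ℝ)^k)⁻¹ - dist c c') / 2 := by
          rw [dist_comm c' (e (seq c' n))]; linarith
      _ = ((2 : ℝ) ^ k)⁻¹ := by ring
  -- continuity
  have hcont : Continuous F := by
    rw [continuous_generateFrom_iff]
    rintro U ⟨L, hLreg, rfl⟩
    rw [Metric.isOpen_iff]
    intro c hc
    have hc' : L ∈ Fu (seq c) := hc
    obtain ⟨M, _, _, φ, S, hL⟩ := id hLreg
    obtain ⟨-, n₀, hmem⟩ := hc'
    refine ⟨((2 : ℝ) ^ (Fintype.card M))⁻¹ / 2, by positivity, fun c' hcc' => ?_⟩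
    rw [Metric.mem_ball] at hcc'
    have hlt : dist c c' < ((2 : ℝ) ^ (Fintype.card M))⁻¹ := by
      rw [dist_comm] at hcc'
      have : (0:ℝ) < ((2 : ℝ) ^ (Fintype.card M))⁻¹ := by positivity
      linarith
    obtain ⟨N, hN⟩ := hcross c c' (Fintype.card M) hlt
    show L ∈ Fu (seq c')
    refine ⟨hLreg, max n₀ N, fun n hn => ?_⟩
    have h1 : seq c n ∈ L := hmem n (le_trans (le_max_left _ _) hn)
    have h2 : φ (seq c n) = φ (seq c' n) :=
      phi_eq_of (Fintype.card M) M le_rfl φ (hN n (le_trans (le_max_right _ _) hn))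
    rw [hL] at h1 ⊢
    show φ (seq c' n) ∈ S
    rw [← h2]; exact h1
  -- injectivity
  have hinj : Function.Injective F := by
    intro c c' hFeq
    by_contra hne
    have hd : 0 < dist c c' := dist_pos.mpr hne
    obtain ⟨k, hk⟩ := hpow (dist c c' / 3) (by positivity)
    obtain ⟨N₁, h₁⟩ := hev c k
    obtain ⟨N₂, h₂⟩ := hev c' k
    obtain ⟨N₃, h₃⟩ := hfrac (dist c c' / 3) (by positivity)
    set N := max (max N₁ N₂) N₃ with hNdef
    have hN₁ : N₁ ≤ N := le_trans (le_max_left _ _) (le_max_left _ _)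
    have hN₂ : N₂ ≤ N := le_trans (le_max_right _ _) (le_max_left _ _)
    have hN₃ : N₃ ≤ N := le_max_right _ _
    have hm : Phi A k (seq c N) ≠ Phi A k (seq c' N) := by
      intro hEq
      have hpd := (pdist_lt_iff k _ _).mpr hEq
      rw [← hiso] at hpd
      have d1 : dist (e (seq c N)) c < dist c c' / 3 := lt_trans (hseq c N) (h₃ N hN₃)
      have d2 : dist (e (seq c' N)) c' < dist c c' / 3 := lt_trans (hseq c' N) (h₃ N hN₃)
      have htri : dist c c' ≤ dist (e (seq c N)) c + dist (e (seq c N)) (e (seq c' N))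
          + dist (e (seq c' N)) c' := by
        have := dist_triangle4 c (e (seq c N)) (e (seq c' N)) c'
        rw [dist_comm c (e (seq c N))] at this
        linarith
      linarith
    have hLc : (Phi A k) ⁻¹' {Phi A k (seq c N)} ∈ Fu (seq c) :=
      ⟨regular_phiInv k _, N, fun n hn => by
        show Phi A k (seq c n) = Phi A k (seq c N)
        exact h₁ n N (le_trans hN₁ hn) hN₁⟩
    have hLc' : (Phi A k) ⁻¹' {Phi A k (seq c' N)} ∈ Fu (seq c') :=
      ⟨regular_phiInv k _, N, fun n hn => by
        show Phi A k (seq c' n) = Phi A k (seq c' N)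
        exact h₂ n N (le_trans hN₂ hn) hN₂⟩
    have hset : Fu (seq c) = Fu (seq c') := congrArg Subtype.val hFeq
    have hint := (Stmt9Aux.fu_ultra (seqCauchy c)).2.2.2.2.1 _ _ hLc (hset ▸ hLc')
    have hempty : ((Phi A k) ⁻¹' {Phi A k (seq c N)}) ∩ ((Phi A k) ⁻¹' {Phi A k (seq c' N)})
        = ∅ := by
      ext z
      simp only [Set.mem_inter_iff, Set.mem_preimage, Set.mem_singleton_iff,
        Set.mem_empty_iff_false, iff_false, not_and]
      intro hz1 hz2
      exact hm (hz1 ▸ hz2 ▸ rfl)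
    exact (Stmt9Aux.fu_ultra (seqCauchy c)).2.2.1 (hempty ▸ hint)
  -- surjectivity
  have hsurj : Function.Surjective F := by
    intro γ
    choose m hm using fun k : ℕ => Stmt9Aux.exists_class γ.2 k
    have hne : ∀ k : ℕ, ∃ z : List A, z ∈ (Phi A k) ⁻¹' {m k} := by
      intro k
      by_contra h
      push_neg at h
      have : (Phi A k) ⁻¹' {m k} = ∅ := Set.eq_empty_iff_forall_notMem.mpr h
      exact γ.2.2.2.1 (this ▸ hm k)
    choose w hw using hne
    have hwk : ∀ k, Phi A k (w k) = m k := fun k => hw k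
    have hcompat : ∀ k j, k ≤ j → Phi A k (w j) = Phi A k (w k) := by
      intro k j hkj
      have hinter := γ.2.2.2.2.2.1 _ _ (hm k) (hm j)
      have hnonempty : ((Phi A k) ⁻¹' {m k} ∩ (Phi A j) ⁻¹' {m j}).Nonempty := by
        rcases Set.eq_empty_or_nonempty ((Phi A k) ⁻¹' {m k} ∩ (Phi A j) ⁻¹' {m j}) with h | h
        · exact absurd (h ▸ hinter) γ.2.2.2.1
        · exact h
      obtain ⟨z, hz1, hz2⟩ := hnonempty
      have hz1' : Phi A k z = m k := hz1
      have hz2' : Phi A j z = m j := hz2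
      have h1 : Phi A j z = Phi A j (w j) := by rw [hz2', hwk j]
      have h2 : Phi A k z = Phi A k (w j) := Stmt9Aux.phi_mono hkj h1
      rw [← h2, hwk k]
      exact hz1' 
    have hwC : IsPCauchy w := by
      intro ε hε
      obtain ⟨k, hk⟩ := hpow ε hε
      refine ⟨k, fun a b ha hb => lt_trans ?_ hk⟩
      exact (pdist_lt_iff k _ _).mpr (by rw [hcompat k a ha, hcompat k b hb])
    have hCauchy : CauchySeq (fun n => e (w n)) := by
      rw [Metric.cauchySeq_iff]
      intro ε hε
      obtain ⟨N, hN⟩ := hwC ε hε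
      refine ⟨N, fun a ha b hb => ?_⟩
      rw [hiso]
      exact hN a b ha hb
    obtain ⟨c, hc⟩ := cauchySeq_tendsto_of_complete hCauchy
    refine ⟨c, Subtype.ext ?_⟩
    have hFuw_sub : Fu w ⊆ γ.1 := by
      rintro L ⟨hreg, n₀, hmemL⟩
      obtain ⟨M, _, _, φ, S, hL⟩ := id hreg
      set k := Fintype.card M with hkdef
      set n := max n₀ k with hndef
      have hsub : (Phi A k) ⁻¹' {m k} ⊆ L := by
        intro z hz
        have hz' : Phi A k z = m k := hz
        have h1 : Phi A k z = Phi A k (w n) := by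
          rw [hz', ← hwk k, ← hcompat k n (le_max_right _ _)]
        have h2 : φ z = φ (w n) := phi_eq_of k M le_rfl φ h1
        have h3 : w n ∈ L := hmemL n (le_max_left _ _)
        rw [hL] at h3 ⊢
        show φ z ∈ S
        rw [h2]
        exact h3
      exact γ.2.2.2.2.1 _ L (hm k) hreg hsub
    have hFuw_sup : γ.1 ⊆ Fu w := by
      intro L hLγ
      have hreg := γ.2.1 L hLγ
      rcases (Stmt9Aux.fu_ultra hwC).2.2.2.2.2 L hreg with h | h
      · exact h
      · exfalso
        have hcompl : Lᶜ ∈ γ.1 := hFuw_sub h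
        have hint := γ.2.2.2.2.2.1 L Lᶜ hLγ hcompl
        rw [Set.inter_compl_self] at hint
        exact γ.2.2.2.1 hint
    have hFuw : Fu w = γ.1 := Set.Subset.antisymm hFuw_sub hFuw_sup
    have h0 : ∀ ε : ℝ, 0 < ε → ∃ N, ∀ n, N ≤ n → pdist (w n) (seq c n) < ε := by
      intro ε hε
      obtain ⟨N₁, hN₁⟩ := Metric.tendsto_atTop.mp hc (ε / 2) (by positivity)
      obtain ⟨N₂, hN₂⟩ := hfrac (ε / 2) (by positivity)
      refine ⟨max N₁ N₂, fun n hn => ?_⟩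
      rw [← hiso]
      calc dist (e (w n)) (e (seq c n))
          ≤ dist (e (w n)) c + dist (e (seq c n)) c := dist_triangle_right _ _ _
        _ < ε / 2 + ε / 2 := by
            have ha := hN₁ n (le_trans (le_max_left _ _) hn)
            have hb := lt_trans (hseq c n) (hN₂ n (le_trans (le_max_right _ _) hn))
            linarith
        _ = ε := by ring
    have h0' : ∀ ε : ℝ, 0 < ε → ∃ N, ∀ n, N ≤ n → pdist (seq c n) (w n) < ε := by
      intro ε hε
      obtain ⟨N, hN⟩ := h0 ε hε
      refine ⟨N, fun n hn => ?_⟩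
      rw [← hiso, dist_comm, hiso]
      exact hN n hn
    have hFuseq : Fu (seq c) = Fu w :=
      Set.Subset.antisymm (Stmt9Aux.fu_congr h0') (Stmt9Aux.fu_congr h0)
    show Fu (seq c) = γ.1
    rw [hFuseq, hFuw]
  -- compactness of C
  haveI : CompactSpace C := by
    have htb : TotallyBounded (Set.range e) := by
      rw [Metric.totallyBounded_iff]
      intro ε hε
      obtain ⟨k, hk⟩ := hpow ε hε
      refine ⟨(fun p : P A k => e (Function.invFun (Phi A k) p)) '' Set.univ,
        (Set.toFinite _).image _, ?_⟩
      rintro - ⟨x, rfl⟩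
      have hmem : Phi A k x ∈ Set.range (Phi A k) := ⟨x, rfl⟩
      have hinv : Phi A k (Function.invFun (Phi A k) (Phi A k x)) = Phi A k x :=
        Function.invFun_eq hmem
      refine Set.mem_biUnion ⟨Phi A k x, trivial, rfl⟩ ?_
      rw [Metric.mem_ball, hiso]
      exact lt_trans ((pdist_lt_iff k _ _).mpr hinv.symm) hk
    have hclosed : IsCompact (Set.univ : Set C) := by
      rw [← hdense.closure_range]
      exact TotallyBounded.isCompact_of_isClosed htb.closure isClosed_closure
    exact ⟨hclosed⟩
  haveI : T2Space (RegStone A) := Stmt9Aux.t2 A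
  exact ⟨Continuous.homeoOfEquivCompactToT2 (f := Equiv.ofBijective F ⟨hinj, hsurj⟩) hcont⟩
end

section
/- A language L ⊆ A* is regular if and only if its topological closure in the free profinite monoid over A is a clopen set. -/
namespace Stmt10Aux

variable {A : Type}

/-- syntactic relation -/
def SynRel (L : Set (List A)) (x y : List A) : Prop :=
  ∀ u v : List A, u ++ x ++ v ∈ L ↔ u ++ y ++ v ∈ L

def synSetoid (L : Set (List A)) : Setoid (List A) where
  r := SynRel L
  iseqv := ⟨fun _ _ _ => Iff.rfl, fun h u v => (h u v).symm,
    fun h1 h2 u v => (h1 u v).trans (h2 u v)⟩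

def Syn (L : Set (List A)) : Type := Quotient (synSetoid L)

theorem mul_wd (L : Set (List A)) : ∀ (x y x' y' : List A),
    SynRel L x x' → SynRel L y y' → SynRel L (x ++ y) (x' ++ y') := by
  intro x y x' y' hx hy u v
  have e1 : u ++ (x ++ y) ++ v = u ++ x ++ (y ++ v) := by simp [List.append_assoc]
  have e2 : u ++ x' ++ (y ++ v) = (u ++ x') ++ y ++ v := by simp [List.append_assoc]
  have e3 : (u ++ x') ++ y' ++ v = u ++ (x' ++ y') ++ v := by simp [List.append_assoc]
  rw [e1, hx u (y ++ v), e2, hy (u ++ x') v, e3]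

instance synMonoid (L : Set (List A)) : Monoid (Syn L) where
  one := Quotient.mk (synSetoid L) []
  mul := Quotient.map₂ (· ++ ·) (fun _ _ h _ _ h' => mul_wd L _ _ _ _ h h')
  mul_assoc a b c := by
    induction a using Quotient.ind
    induction b using Quotient.ind
    induction c using Quotient.ind
    exact congrArg (Quotient.mk _) (List.append_assoc _ _ _)
  one_mul a := by
    induction a using Quotient.ind
    rfl
  mul_one a := by
    induction a using Quotient.ind
    exact congrArg (Quotient.mk _) (List.append_nil _)

def synHom (L : Set (List A)) : FreeMonoid A →* Syn L where
  toFun w := Quotient.mk (synSetoid L) w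
  map_one' := rfl
  map_mul' _ _ := rfl

theorem syn_recognizes (L : Set (List A)) : L = (synHom L) ⁻¹' ((synHom L) '' L) := by
  ext x
  constructor
  · exact fun hx => ⟨x, hx, rfl⟩
  · rintro ⟨y, hy, hxy⟩
    have h : SynRel L y x := Quotient.exact hxy
    have := (h [] []).mp ((congrArg (· ∈ L) (((fun l => by simp) : ∀ l : List A, [] ++ l ++ [] = l) y)).mpr hy)
    simpa using this

theorem finite_syn (L : Set (List A)) {T : Type} [Finite T] (f : List A → T)
    (hf : ∀ a b, f a = f b → SynRel L a b) : Finite (Syn L) := by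
  apply Finite.of_injective (fun q : Syn L => f q.out)
  intro q1 q2 h
  rw [← Quotient.out_eq q1, ← Quotient.out_eq q2]
  exact Quotient.sound (hf _ _ h)

theorem finite_syn_singleton [Finite A] (x : List A) :
    Finite (Syn ({x} : Set (List A))) := by
  classical
  have F1 : Finite {l : List A // l.length ≤ x.length} :=
    (List.finite_length_le A x.length).to_subtype
  let D := {p : List A × List A // p.1.length ≤ x.length ∧ p.2.length ≤ x.length}
  have FD : Finite D := by
    apply Finite.of_injective (fun q : D =>
      ((⟨q.1.1, q.2.1⟩ : {l : List A // l.length ≤ x.length}),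
       (⟨q.1.2, q.2.2⟩ : {l : List A // l.length ≤ x.length})))
    rintro ⟨⟨a, b⟩, _⟩ ⟨⟨c, d⟩, _⟩ h
    simp only [Prod.mk.injEq, Subtype.mk.injEq] at h
    simp [Prod.ext_iff, h.1, h.2]
  apply finite_syn ({x} : Set (List A)) (fun w => fun q : D => q.1.1 ++ w ++ q.1.2 = x)
  intro a b hab u v
  have key : ∀ w : List A, u ++ w ++ v = x →
      u.length ≤ x.length ∧ v.length ≤ x.length := by
    intro w hw
    have := congrArg List.length hw
    simp [List.length_append] at this
    omega
  simp only [Set.mem_singleton_iff]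
  constructor
  · intro h'
    have hq := congrFun hab (⟨(u, v), key a h'⟩ : D)
    simp only [eq_iff_iff] at hq
    exact hq.mp h'
  · intro h'
    have hq := congrFun hab (⟨(u, v), key b h'⟩ : D)
    simp only [eq_iff_iff] at hq
    exact hq.mpr h'

end Stmt10Aux

namespace Stmt10Aux

variable {A : Type}

theorem le_pdist_of_sep {x y : List A} {k : ℕ} (h : SeparatesCard A k x y) :
    ((2 : ℝ) ^ k)⁻¹ ≤ pdist x y := by
  have hne : {j : ℕ | SeparatesCard A j x y}.Nonempty := ⟨k, h⟩
  rw [pdist, dif_pos hne]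
  have h1 : sInf {j : ℕ | SeparatesCard A j x y} ≤ k := Nat.sInf_le h
  have h2 : (2 : ℝ) ^ sInf {j : ℕ | SeparatesCard A j x y} ≤ (2 : ℝ) ^ k :=
    pow_le_pow_right₀ (by norm_num) h1
  exact inv_anti₀ (by positivity) h2

theorem pdist_le_of_not_sep {x y : List A} {k : ℕ}
    (h : ∀ j ≤ k, ¬ SeparatesCard A j x y) :
    pdist x y ≤ ((2 : ℝ) ^ (k + 1))⁻¹ := by
  rw [pdist]
  split_ifs with hne
  · have hmem := Nat.sInf_mem hne
    have h1 : k + 1 ≤ sInf {j : ℕ | SeparatesCard A j x y} := by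
      by_contra hc
      exact h _ (by omega) hmem
    have h2 : (2 : ℝ) ^ (k + 1) ≤ (2 : ℝ) ^ sInf {j : ℕ | SeparatesCard A j x y} :=
      pow_le_pow_right₀ (by norm_num) h1
    exact inv_anti₀ (by positivity) h2
  · positivity

/-- Fingerprint target type. -/
def FPT (A : Type) (k : ℕ) : Type :=
  (j : Fin k) → (Fin (j.1 + 1) → Fin (j.1 + 1) → Fin (j.1 + 1)) → Fin (j.1 + 1) →
    (A → Fin (j.1 + 1)) → Fin (j.1 + 1)

instance [Finite A] (k : ℕ) : Finite (FPT A k) := by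
  unfold FPT; infer_instance

/-- The fingerprint of a word: all evaluations under all "multiplication tables" of size ≤ k. -/
def fp (k : ℕ) (x : List A) : FPT A k :=
  fun _ mul one f => x.foldl (fun c a => mul c (f a)) one

theorem foldl_hom {M : Type} [Monoid M] {m : ℕ} (g : M ≃ Fin (m + 1))
    (φ : FreeMonoid A →* M) (l : List A) :
    ∀ c : M, l.foldl (fun c a => g (g.symm c * g.symm (g (φ (FreeMonoid.of a))))) (g c)
      = g (c * φ (FreeMonoid.ofList l)) := by
  induction l with
  | nil => intro c; simp [FreeMonoid.ofList_nil]
  | cons a l ih =>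
    intro c
    rw [List.foldl_cons]
    have h1 : g (g.symm (g c) * g.symm (g (φ (FreeMonoid.of a)))) = g (c * φ (FreeMonoid.of a)) := by
      simp
    rw [h1, ih]
    congr 1
    rw [FreeMonoid.ofList_cons, map_mul, mul_assoc]

theorem not_sep_of_fp_eq {k : ℕ} {x y : List A} (h : fp k x = fp k y) :
    ∀ j ≤ k, ¬ SeparatesCard A j x y := by
  rintro j hjk ⟨M, _, _, hcard, φ, hφ⟩
  have hpos : 0 < j := by
    have : Nonempty M := ⟨1⟩
    have := Fintype.card_pos (α := M)
    omega
  have hjk' : j - 1 < k := by omega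
  set j' : Fin k := ⟨j - 1, hjk'⟩ with hj'
  have hcard' : Fintype.card M = j'.1 + 1 := by simp [hj']; omega
  let g : M ≃ Fin (j'.1 + 1) := Fintype.equivFinOfCardEq hcard'
  let mul' : Fin (j'.1 + 1) → Fin (j'.1 + 1) → Fin (j'.1 + 1) :=
    fun c d => g (g.symm c * g.symm d)
  let f : A → Fin (j'.1 + 1) := fun a => g (φ (FreeMonoid.of a))
  have hx := congrFun (congrFun (congrFun (congrFun h j') mul') (g 1)) f
  have ex : fp k x j' mul' (g 1) f = g (1 * φ (FreeMonoid.ofList x)) := foldl_hom g φ x 1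
  have ey : fp k y j' mul' (g 1) f = g (1 * φ (FreeMonoid.ofList y)) := foldl_hom g φ y 1
  rw [ex, ey] at hx
  simp only [one_mul] at hx
  exact hφ (g.injective hx)

/-- key radius lemma: around each word there is a positive radius excluding all others -/
theorem exists_sep_radius [Finite A] (x : List A) :
    ∃ ε : ℝ, 0 < ε ∧ ∀ y : List A, y ≠ x → ε ≤ pdist x y := by
  have hfin : Finite (Syn ({x} : Set (List A))) := finite_syn_singleton x
  letI : Fintype (Syn ({x} : Set (List A))) := Fintype.ofFinite _
  refine ⟨((2 : ℝ) ^ Fintype.card (Syn ({x} : Set (List A))))⁻¹, by positivity, ?_⟩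
  intro y hy
  apply le_pdist_of_sep
  refine ⟨Syn ({x} : Set (List A)), inferInstance, inferInstance, rfl,
    synHom ({x} : Set (List A)), ?_⟩
  intro hc
  have h : SynRel ({x} : Set (List A)) x y := Quotient.exact hc
  have := (h [] []).mp (by simp)
  simp at this
  exact hy this

end Stmt10Aux

/-- A language L ⊆ A* is regular iff its topological closure in the free
profinite monoid over A (any complete metric space into which A* embeds isometrically,
w.r.t. the profinite metric, and densely) is a clopen set. -/
theorem stmt10 {A : Type} [Fintype A] (C : Type) [MetricSpace C] [CompleteSpace C]
    (e : List A → C) (hiso : ∀ x y : List A, dist (e x) (e y) = pdist x y)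
    (hdense : DenseRange e) (L : Set (List A)) :
    RegularLang L ↔ IsClopen (closure (e '' L)) := by
  classical
  haveI : Finite A := Finite.of_fintype A
  constructor
  · rintro ⟨M, hM, hF, φ, S, rfl⟩
    have hdisj : closure (e '' (φ ⁻¹' S)) ∩ closure (e '' (φ ⁻¹' S)ᶜ) = ∅ := by
      ext c
      simp only [Set.mem_inter_iff, Set.mem_empty_iff_false, iff_false, not_and]
      intro h1 h2
      set δ := ((2 : ℝ) ^ Fintype.card M)⁻¹ with hδ
      have hδpos : 0 < δ := by positivity
      obtain ⟨c1, ⟨x, hx, rfl⟩, hd1⟩ := Metric.mem_closure_iff.1 h1 (δ / 2) (by positivity)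
      obtain ⟨c2, ⟨y, hy, rfl⟩, hd2⟩ := Metric.mem_closure_iff.1 h2 (δ / 2) (by positivity)
      have hφxy : φ x ≠ φ y := by
        intro hc
        exact hy (by have hx' : φ x ∈ S := hx; rw [hc] at hx'; exact hx')
      have hsep : SeparatesCard A (Fintype.card M) x y := ⟨M, hM, hF, rfl, φ, hφxy⟩
      have hle := Stmt10Aux.le_pdist_of_sep hsep
      have hlt : dist (e x) (e y) < δ := by
        have htri := dist_triangle (e x) c (e y)
        rw [dist_comm (e x) c] at htri
        linarith
      rw [hiso] at hlt
      linarith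
    have hcover : closure (e '' (φ ⁻¹' S)) ∪ closure (e '' (φ ⁻¹' S)ᶜ) = Set.univ := by
      have h1 : (Set.range e) = e '' (φ ⁻¹' S) ∪ e '' (φ ⁻¹' S)ᶜ := by
        rw [← Set.image_union, Set.union_compl_self, Set.image_univ]
      have h2 := hdense.closure_eq
      rw [h1, closure_union] at h2
      exact h2
    refine ⟨isClosed_closure, ?_⟩
    have hcompl : (closure (e '' (φ ⁻¹' S)))ᶜ = closure (e '' (φ ⁻¹' S)ᶜ) := by
      ext c
      constructor
      · intro hc
        have : c ∈ closure (e '' (φ ⁻¹' S)) ∪ closure (e '' (φ ⁻¹' S)ᶜ) := by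
          rw [hcover]; trivial
        rcases this with h | h
        · exact absurd h hc
        · exact h
      · intro hc hc2
        have : c ∈ closure (e '' (φ ⁻¹' S)) ∩ closure (e '' (φ ⁻¹' S)ᶜ) := ⟨hc2, hc⟩
        rw [hdisj] at this
        exact this
    have : IsClosed (closure (e '' (φ ⁻¹' S)))ᶜ := by
      rw [hcompl]; exact isClosed_closure
    have h := this.isOpen_compl; rw [compl_compl] at h; exact h
  · intro hK
    have tb : TotallyBounded (Set.range e) := by
      rw [Metric.totallyBounded_iff]
      intro ε hε
      obtain ⟨k, hk⟩ : ∃ k : ℕ, ((2 : ℝ) ^ k)⁻¹ < ε := by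
        obtain ⟨k, hk⟩ := exists_pow_lt_of_lt_one hε (by norm_num : (1 : ℝ) / 2 < 1)
        exact ⟨k, by rwa [one_div, inv_pow] at hk⟩
      let R : Stmt10Aux.FPT A k → List A :=
        fun v => if h : ∃ x : List A, Stmt10Aux.fp k x = v then h.choose else []
      refine ⟨e '' (R '' Set.univ), ((Set.finite_univ).image R).image e, ?_⟩
      rintro _ ⟨x, rfl⟩
      have hmem : ∃ z : List A, Stmt10Aux.fp k z = Stmt10Aux.fp k x := ⟨x, rfl⟩
      have hfp : Stmt10Aux.fp k (R (Stmt10Aux.fp k x)) = Stmt10Aux.fp k x := by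
        simp only [R, dif_pos hmem]
        exact hmem.choose_spec
      have hd : pdist (R (Stmt10Aux.fp k x)) x ≤ ((2 : ℝ) ^ (k + 1))⁻¹ :=
        Stmt10Aux.pdist_le_of_not_sep (Stmt10Aux.not_sep_of_fp_eq hfp)
      simp only [Set.mem_iUnion, Metric.mem_ball, exists_prop]
      refine ⟨e (R (Stmt10Aux.fp k x)), ⟨R (Stmt10Aux.fp k x), ⟨Stmt10Aux.fp k x, trivial, rfl⟩, rfl⟩, ?_⟩
      rw [dist_comm, hiso]
      have h2 : ((2 : ℝ) ^ (k + 1))⁻¹ < ((2 : ℝ) ^ k)⁻¹ := by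
        apply inv_strictAnti₀ (by positivity)
        apply pow_lt_pow_right₀ (by norm_num)
        omega
      linarith
    haveI : CompactSpace C := by
      constructor
      have h1 : TotallyBounded (Set.univ : Set C) := by
        have h2 := tb.closure
        rwa [hdense.closure_eq] at h2
      exact h1.isCompact_of_isClosed isClosed_univ
    have hsub : ∀ x ∈ L, e x ∈ closure (e '' L) := fun x hx => subset_closure ⟨x, hx, rfl⟩
    have hLK : ∀ x : List A, e x ∈ closure (e '' L) → x ∈ L := by
      intro x hx
      by_contra hxL
      obtain ⟨εx, hεpos, hεx⟩ := Stmt10Aux.exists_sep_radius x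
      obtain ⟨c, ⟨y, hyL, rfl⟩, hdxy⟩ := Metric.mem_closure_iff.1 hx εx hεpos
      rw [hiso] at hdxy
      by_cases hyx : y = x
      · exact hxL (hyx ▸ hyL)
      · exact absurd hdxy (not_lt.2 (hεx y hyx))
    rcases Set.eq_empty_or_nonempty (closure (e '' L)) with hKe | hKne
    · have hL0 : L = ∅ := Set.eq_empty_iff_forall_notMem.2 fun x hx => by
        have := hsub x hx
        rw [hKe] at this
        exact this
      rw [hL0]
      exact ⟨PUnit, inferInstance, inferInstance, 1, ∅, by simp; rfl⟩
    rcases Set.eq_empty_or_nonempty (closure (e '' L))ᶜ with hKce | hKcne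
    · have hKu : closure (e '' L) = Set.univ := by
        rw [← compl_compl (closure (e '' L)), hKce, Set.compl_empty]
      have hL1 : L = Set.univ := Set.eq_univ_iff_forall.2 fun x => hLK x (by rw [hKu]; trivial)
      rw [hL1]
      exact ⟨PUnit, inferInstance, inferInstance, 1, Set.univ, by simp; rfl⟩
    have hKcl : IsClosed (closure (e '' L))ᶜ := hK.2.isClosed_compl
    have hKcomp : IsCompact (closure (e '' L)) := hK.1.isCompact
    obtain ⟨c0, hc0, hmin⟩ := hKcomp.exists_isMinOn hKne
      (Metric.continuous_infDist_pt _).continuousOn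
    set δ := Metric.infDist c0 (closure (e '' L))ᶜ with hδdef
    have hδpos : 0 < δ := by
      rw [hδdef]
      exact (hKcl.notMem_iff_infDist_pos hKcne).1 (by simp [hc0])
    have hsep : ∀ x ∈ L, ∀ y ∉ L, δ ≤ pdist x y := by
      intro x hx y hy
      rw [← hiso]
      have h1 : δ ≤ Metric.infDist (e x) (closure (e '' L))ᶜ :=
        (isMinOn_iff.mp hmin) _ (hsub x hx)
      have h2 : Metric.infDist (e x) (closure (e '' L))ᶜ ≤ dist (e x) (e y) :=
        Metric.infDist_le_dist_of_mem (fun hc => hy (hLK y hc))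
      linarith
    obtain ⟨k, hk⟩ : ∃ k : ℕ, ((2 : ℝ) ^ (k + 1))⁻¹ < δ := by
      obtain ⟨k, hk⟩ := exists_pow_lt_of_lt_one hδpos (by norm_num : (1 : ℝ) / 2 < 1)
      refine ⟨k, lt_of_le_of_lt ?_ (by rwa [one_div, inv_pow] at hk)⟩
      apply inv_anti₀ (by positivity)
      apply pow_le_pow_right₀ (by norm_num)
      omega
    have hkey : ∀ a b : List A, Stmt10Aux.fp k a = Stmt10Aux.fp k b →
        Stmt10Aux.SynRel L a b := by
      have haux : ∀ a b : List A, Stmt10Aux.fp k a = Stmt10Aux.fp k b →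
          ∀ u v : List A, u ++ a ++ v ∈ L → u ++ b ++ v ∈ L := by
        intro a b hab u v hm
        by_contra hm2
        have h1 : δ ≤ pdist (u ++ a ++ v) (u ++ b ++ v) := hsep _ hm _ hm2
        have h2 : ∃ j, j ≤ k ∧ SeparatesCard A j (u ++ a ++ v) (u ++ b ++ v) := by
          by_contra hc
          push_neg at hc
          have := Stmt10Aux.pdist_le_of_not_sep (fun j hj => hc j hj)
          linarith
        obtain ⟨j, hj, M, hM, hF, hcard, ψ, hψ⟩ := h2
        have hψab : ψ a ≠ ψ b := by
          intro hc
          apply hψ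
          have key : ∀ w : List A, ψ (FreeMonoid.ofList (u ++ w ++ v)) =
              ψ (FreeMonoid.ofList u) * ψ (FreeMonoid.ofList w) * ψ (FreeMonoid.ofList v) := by
            intro w
            rw [FreeMonoid.ofList_append, FreeMonoid.ofList_append, map_mul, map_mul]
          have ha := key a
          have hb := key b
          show ψ (FreeMonoid.ofList (u ++ a ++ v)) = ψ (FreeMonoid.ofList (u ++ b ++ v))
          rw [ha, hb, show ψ (FreeMonoid.ofList a) = ψ (FreeMonoid.ofList b) from hc]
        exact Stmt10Aux.not_sep_of_fp_eq hab j hj ⟨M, hM, hF, hcard, ψ, hψab⟩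
      intro a b hab u v
      exact ⟨haux a b hab u v, haux b a hab.symm u v⟩
    haveI hfin : Finite (Stmt10Aux.Syn L) := Stmt10Aux.finite_syn L (Stmt10Aux.fp k) hkey
    letI : Fintype (Stmt10Aux.Syn L) := Fintype.ofFinite _
    exact ⟨Stmt10Aux.Syn L, inferInstance, inferInstance, Stmt10Aux.synHom L,
      Stmt10Aux.synHom L '' L, Stmt10Aux.syn_recognizes L⟩
end

section
/- Let V be a variety of languages, τ_D : A* → (A × D)* the length-preserving transduction associated to a finite partition D of ℕ², and let (V □ P_arb)_A be the Boolean algebra generated by all τ_D⁻¹(L) with L ∈ V_{A×D}. Then for ultrafilters μ, ν on A*: the equation [μ ↔ ν] holds for (V □ P_arb)_A if and only if for every finite partition D of ℕ², the equation [βτ_D(μ) ↔ βτ_D(ν)] holds for V_{A×D}. -/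
/-- The ℕ-transduction associated with a finite partition of ℕ² (presented as a class map
d : ℕ² → Fin k): the i-th letter of τ_D(w) is (w_i, class of (i, |w|−i−1)). -/
def tauD {A : Type} {k : ℕ} (d : ℕ × ℕ → Fin k) (w : List A) : List (A × Fin k) :=
  w.mapIdx (fun i a => (a, d (i, w.length - i - 1)))

/-- The Boolean algebra generated by a family G of subsets of X. -/
inductive GenBA {X : Type} (G : Set (Set X)) : Set X → Prop
  | base : ∀ s ∈ G, GenBA G s
  | empty : GenBA G ∅
  | compl : ∀ s, GenBA G s → GenBA G sᶜ
  | union : ∀ s t, GenBA G s → GenBA G t → GenBA G (s ∪ t)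

/-- Let V assign to each alphabet A × D (D a finite partition of ℕ², with
class map d : ℕ² → Fin k) a Boolean algebra V k of languages, and let (V □ P_arb)_A be
the Boolean algebra generated by all τ_D⁻¹(L), L ∈ V_{A×D}.  For ultrafilters μ, ν on A*,
the equation [μ ↔ ν] holds for (V □ P_arb)_A iff for every finite partition D of ℕ² the
equation [βτ_D(μ) ↔ βτ_D(ν)] holds for V_{A×D}. -/
theorem stmt13 {A : Type} (V : (k : ℕ) → Set (Set (List (A × Fin k))))
    (μ ν : Ultrafilter (List A)) :
    (∀ S : Set (List A),
        GenBA {S | ∃ (k : ℕ) (d : ℕ × ℕ → Fin k) (L : Set (List (A × Fin k))),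
          L ∈ V k ∧ S = tauD d ⁻¹' L} S →
        (S ∈ μ ↔ S ∈ ν)) ↔
    (∀ (k : ℕ) (d : ℕ × ℕ → Fin k), ∀ L ∈ V k,
        (L ∈ Ultrafilter.map (tauD d) μ ↔ L ∈ Ultrafilter.map (tauD d) ν)) := by
  constructor
  · intro h k d L hL
    simp only [Ultrafilter.mem_map]
    exact h _ (GenBA.base _ ⟨k, d, L, hL, rfl⟩)
  · intro h S hS
    induction hS with
    | base s hs =>
      obtain ⟨k, d, L, hL, rfl⟩ := hs
      simpa only [Ultrafilter.mem_map] using h k d L hL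
    | empty => simp
    | compl s _ ih => simp [Ultrafilter.compl_mem_iff_notMem, ih]
    | union s t _ _ ihs iht => simp [Ultrafilter.union_mem_iff, ihs, iht]
end
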